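/- arXiv:1810.06948 — 2 statements merged into one kernel-verified Lean document; each statement's English description precedes it below -/
import Mathlib

section
/- Let p ≥ 1 and let a₁, ..., a_p be positive reals with m = min_n a_n and M = max_n a_n. Then 4(a₁ ⋯ a_p)^{1/p} − 4m ≥ 4 m^{(p−1)/p} (M^{1/p} − m^{1/p}) ≥ (4/p) (m/M)^{(p−1)/p} (M − m). -/
lemma bern_aux {p : ℕ} (hp : 1 ≤ p) {x : ℝ} (hx0 : 0 < x) :
    x ^ ((1:ℝ)/p) ≤ 1 + (x - 1) / p := by
  have hp0 : (0:ℝ) < p := by exact_mod_cast hp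
  have hp1 : (1:ℝ) ≤ p := by exact_mod_cast hp
  have hs : (-1:ℝ) ≤ (x - 1) / p := by
    rw [le_div_iff₀ hp0]; nlinarith
  have h := one_add_mul_self_le_rpow_one_add hs (p := (p:ℝ)) hp1
  have hx : x ≤ (1 + (x - 1) / p) ^ (p:ℝ) := by
    have he : (1:ℝ) + (p:ℝ) * ((x - 1)/p) = x := by field_simp; ring
    linarith [he ▸ h]
  have hbase : (0:ℝ) ≤ 1 + (x - 1) / p := by
    have : (-1:ℝ) * 1 ≤ (x-1)/p := hs.trans_eq' (by ring)
    linarith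
  calc x ^ ((1:ℝ)/p) ≤ ((1 + (x - 1) / p) ^ (p:ℝ)) ^ ((1:ℝ)/p) :=
        Real.rpow_le_rpow hx0.le hx (by positivity)
    _ = 1 + (x - 1) / p := by
        rw [← Real.rpow_mul hbase, mul_one_div, div_self hp0.ne', Real.rpow_one]

/-- Chain of inequalities:
4(a₁⋯a_p)^{1/p} − 4m ≥ 4 m^{(p−1)/p}(M^{1/p} − m^{1/p}) ≥ (4/p)(m/M)^{(p−1)/p}(M − m). -/
theorem gap_bound_chain (p : ℕ) (hp : 1 ≤ p) (a : Fin p → ℝ) (ha : ∀ n, 0 < a n)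
    (m M : ℝ)
    (hm : m = Finset.univ.inf' ⟨⟨0, hp⟩, Finset.mem_univ _⟩ a)
    (hM : M = Finset.univ.sup' ⟨⟨0, hp⟩, Finset.mem_univ _⟩ a) :
    4 * m ^ (((p : ℝ) - 1) / p) * (M ^ ((1 : ℝ) / p) - m ^ ((1 : ℝ) / p))
      ≤ 4 * (∏ n, a n) ^ ((1 : ℝ) / p) - 4 * m ∧
    (4 / (p : ℝ)) * (m / M) ^ (((p : ℝ) - 1) / p) * (M - m)
      ≤ 4 * m ^ (((p : ℝ) - 1) / p) * (M ^ ((1 : ℝ) / p) - m ^ ((1 : ℝ) / p)) := by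
  have hne : (Finset.univ : Finset (Fin p)).Nonempty := ⟨⟨0, hp⟩, Finset.mem_univ _⟩
  obtain ⟨j, -, hmj⟩ := Finset.exists_mem_eq_inf' hne a
  obtain ⟨i, -, hMi⟩ := Finset.exists_mem_eq_sup' hne a
  have hm0 : 0 < m := by rw [hm, hmj]; exact ha j
  have hle : ∀ n, m ≤ a n := fun n => hm ▸ Finset.inf'_le a (Finset.mem_univ n)
  have haiM : a i = M := by rw [hM, hMi]
  have hmM : m ≤ M := haiM ▸ hle i
  have hM0 : 0 < M := lt_of_lt_of_le hm0 hmM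
  have hp0 : (0:ℝ) < p := by exact_mod_cast hp
  set A := M ^ ((1:ℝ)/p) with hA_def
  set B := m ^ ((1:ℝ)/p) with hB_def
  set C := M ^ (((p:ℝ)-1)/p) with hC_def
  set D := m ^ (((p:ℝ)-1)/p) with hD_def
  have hA : 0 < A := Real.rpow_pos_of_pos hM0 _
  have hB : 0 < B := Real.rpow_pos_of_pos hm0 _
  have hC : 0 < C := Real.rpow_pos_of_pos hM0 _
  have hD : 0 < D := Real.rpow_pos_of_pos hm0 _
  have hexp : ((p:ℝ)-1)/p + 1/p = 1 := by field_simp; ring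
  have hDB : D * B = m := by
    rw [hD_def, hB_def, ← Real.rpow_add hm0, hexp, Real.rpow_one]
  have hCA : C * A = M := by
    rw [hC_def, hA_def, ← Real.rpow_add hM0, hexp, Real.rpow_one]
  constructor
  · -- first inequality
    have hprod : m ^ (p-1) * M ≤ ∏ n, a n := by
      rw [← Finset.mul_prod_erase Finset.univ a (Finset.mem_univ i)]
      have hcard : (Finset.univ.erase i).card = p - 1 := by
        rw [Finset.card_erase_of_mem (Finset.mem_univ i), Finset.card_univ,
          Fintype.card_fin]
      calc m ^ (p-1) * M = M * ∏ _n ∈ Finset.univ.erase i, m := by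
            rw [Finset.prod_const, hcard]; ring
        _ ≤ a i * ∏ n ∈ Finset.univ.erase i, a n := by
            apply mul_le_mul (le_of_eq haiM.symm)
              (Finset.prod_le_prod (fun n _ => hm0.le) (fun n _ => hle n))
              (Finset.prod_nonneg (fun n _ => hm0.le)) (ha i).le
    have hcast : (m:ℝ) ^ (p-1) = m ^ ((p:ℝ)-1) := by
      rw [← Real.rpow_natCast m (p-1), Nat.cast_sub hp, Nat.cast_one]
    have hprod1 : D * A ≤ (∏ n, a n) ^ ((1:ℝ)/p) := by
      have h := Real.rpow_le_rpow (by positivity) hprod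
        (by positivity : (0:ℝ) ≤ 1/(p:ℝ))
      rw [Real.mul_rpow (by positivity) hM0.le, hcast,
        ← Real.rpow_mul hm0.le, mul_one_div] at h
      exact h
    nlinarith [hprod1, hDB, hA, hB, hD]
  · -- second inequality
    have hq : (m/M) ^ ((1:ℝ)/p) = B / A := Real.div_rpow hm0.le hM0.le _
    have hq2 : (m/M) ^ (((p:ℝ)-1)/p) = D / C := Real.div_rpow hm0.le hM0.le _
    have hbern := bern_aux hp (div_pos hm0 hM0) (x := m/M)
    rw [hq, div_le_iff₀ hA] at hbern
    have h1' : B * ((p:ℝ)*M) ≤ ((1 + (m/M - 1)/p) * A) * ((p:ℝ)*M) :=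
      mul_le_mul_of_nonneg_right hbern (by positivity)
    have he : ((1 + (m/M - 1)/p) * A) * ((p:ℝ)*M) = A*((p:ℝ)*M + m - M) := by
      field_simp; ring
    rw [he] at h1'
    have key : (M - m) / ((p:ℝ) * C) ≤ A - B := by
      rw [div_le_iff₀ (by positivity)]
      nlinarith [h1', hCA, hA, hC, hM0, hp0, mul_pos hp0 hM0]
    have hre : (4 / (p:ℝ)) * (D / C) * (M - m) = 4 * D * ((M - m) / ((p:ℝ) * C)) := by
      ring
    rw [hq2, hre]
    exact mul_le_mul_of_nonneg_left key (by positivity)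
end

section
/- Let p ≥ 2 and let a₁, ..., a_p be positive reals with m = min_n a_n and M = max_n a_n, and suppose M ≤ 4m. Then (4/p)(m/M)^{(p−1)/p}(M − m) ≥ (2/p)(M − m) holds when p = 2; more generally, for any p ≥ 2, max( 4(a₁⋯a_p)^{1/p} − 4m, 2M − 4m ) ≥ (2/p)(M − m). -/
/-- For positive reals a₁,...,a_p (p ≥ 2) with minimum m and maximum M,
max(4(a₁⋯a_p)^{1/p} − 4m, 2M − 4m) ≥ (2/p)(M − m). -/
theorem max_gap_bound (p : ℕ) (hp : 2 ≤ p) (a : Fin p → ℝ) (ha : ∀ n, 0 < a n)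
    (m M : ℝ)
    (hm : m = Finset.univ.inf' ⟨⟨0, by omega⟩, Finset.mem_univ _⟩ a)
    (hM : M = Finset.univ.sup' ⟨⟨0, by omega⟩, Finset.mem_univ _⟩ a) :
    (2 / (p : ℝ)) * (M - m)
      ≤ max (4 * (∏ n, a n) ^ ((1 : ℝ) / p) - 4 * m) (2 * M - 4 * m) := by
  have hpR : (2:ℝ) ≤ (p:ℝ) := by exact_mod_cast hp
  have hp0 : (0:ℝ) < (p:ℝ) := by linarith
  have hma : ∀ n, m ≤ a n := fun n => hm ▸ Finset.inf'_le _ (Finset.mem_univ n)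
  have haM : ∀ n, a n ≤ M := fun n => hM ▸ Finset.le_sup' _ (Finset.mem_univ n)
  obtain ⟨i, -, hi⟩ := Finset.exists_mem_eq_inf' (⟨⟨0, by omega⟩, Finset.mem_univ _⟩ :
    (Finset.univ : Finset (Fin p)).Nonempty) a
  obtain ⟨j, -, hj⟩ := Finset.exists_mem_eq_sup' (⟨⟨0, by omega⟩, Finset.mem_univ _⟩ :
    (Finset.univ : Finset (Fin p)).Nonempty) a
  have hm0 : 0 < m := by rw [hm, hi]; exact ha i
  have haj : a j = M := by rw [hM, hj]
  have hmM : m ≤ M := haj ▸ hma j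
  set t : ℝ := M / m with htdef
  have hMt : M = m * t := by
    rw [htdef, mul_div_assoc', mul_comm, mul_div_assoc, div_self hm0.ne', mul_one]
  have ht1 : 1 ≤ t := (one_le_div hm0).2 hmM
  have ht0 : (0:ℝ) ≤ t := by linarith
  set u : ℝ := t ^ ((1:ℝ)/p) with hudef
  have hu1 : 1 ≤ u := Real.one_le_rpow ht1 (by positivity)
  -- product lower bound
  have hprod : m ^ (p-1) * M ≤ ∏ n, a n := by
    have h1 : ∏ _n ∈ Finset.univ.erase j, m ≤ ∏ n ∈ Finset.univ.erase j, a n :=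
      Finset.prod_le_prod (fun _ _ => hm0.le) (fun n _ => hma n)
    have hcard : (Finset.univ.erase j).card = p - 1 := by
      rw [Finset.card_erase_of_mem (Finset.mem_univ j), Finset.card_univ, Fintype.card_fin]
    have h2 : ∏ _n ∈ Finset.univ.erase j, m = m ^ (p-1) := by
      rw [Finset.prod_const, hcard]
    have h3 : a j * ∏ n ∈ Finset.univ.erase j, a n = ∏ n, a n :=
      Finset.mul_prod_erase Finset.univ a (Finset.mem_univ j)
    calc m ^ (p-1) * M = M * ∏ _n ∈ Finset.univ.erase j, m := by rw [h2]; ring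
      _ ≤ a j * ∏ n ∈ Finset.univ.erase j, a n := by
          apply mul_le_mul (le_of_eq haj.symm) h1 (by positivity) (by linarith [ha j])
      _ = ∏ n, a n := h3
  have hPmu : m * u ≤ (∏ n, a n) ^ ((1:ℝ)/p) := by
    have e1 : m ^ (p-1) * M = m ^ p * t := by
      rw [hMt]
      have : m ^ p = m ^ (p-1) * m := by
        rw [← pow_succ]; congr 1; omega
      rw [this]; ring
    have e2 : (m ^ p * t) ^ ((1:ℝ)/p) = m * u := by
      rw [Real.mul_rpow (by positivity) ht0, hudef]
      congr 1
      rw [← Real.rpow_natCast m p, ← Real.rpow_mul hm0.le]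
      rw [mul_one_div, div_self hp0.ne', Real.rpow_one]
    calc m * u = (m ^ (p-1) * M) ^ ((1:ℝ)/p) := by rw [e1, e2]
      _ ≤ (∏ n, a n) ^ ((1:ℝ)/p) :=
          Real.rpow_le_rpow (mul_nonneg (by positivity) (by linarith)) hprod (by positivity)
  have hup : u ^ p = t := by
    rw [hudef, ← Real.rpow_natCast (t ^ ((1:ℝ)/p)) p, ← Real.rpow_mul ht0,
      one_div, inv_mul_cancel₀ hp0.ne', Real.rpow_one]
  have step : ∀ X, 2*(M-m) ≤ (p:ℝ) * X → (2/(p:ℝ))*(M-m) ≤ X := by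
    intro X h
    rw [div_mul_eq_mul_div, div_le_iff₀ hp0]
    linarith
  rcases le_or_gt t ((2:ℝ) ^ ((p:ℝ)/((p:ℝ)-1))) with hA | hB
  · -- geometric mean branch
    refine le_trans ?_ (le_max_left _ _)
    -- u^(p-1) ≤ 2
    have hupm1 : u ^ (p-1) ≤ 2 := by
      have e3 : u ^ (p-1) = t ^ (((p:ℝ)-1)/(p:ℝ)) := by
        rw [hudef, ← Real.rpow_natCast (t ^ ((1:ℝ)/p)) (p-1), ← Real.rpow_mul ht0]
        congr 1
        have : ((p-1 : ℕ) : ℝ) = (p:ℝ) - 1 := by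
          have : (1:ℕ) ≤ p := by omega
          push_cast [this]; ring
        rw [this]; ring
      rw [e3]
      calc t ^ (((p:ℝ)-1)/(p:ℝ))
          ≤ ((2:ℝ) ^ ((p:ℝ)/((p:ℝ)-1))) ^ (((p:ℝ)-1)/(p:ℝ)) :=
            Real.rpow_le_rpow ht0 hA (div_nonneg (by linarith) (by linarith))
        _ = 2 := by
            rw [← Real.rpow_mul (by norm_num)]
            rw [div_mul_div_comm, mul_comm, div_self (mul_ne_zero (by linarith : ((p:ℝ)-1) ≠ 0) hp0.ne')]
            exact Real.rpow_one 2
    -- t - 1 ≤ 2p(u-1)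
    have hgeom : (∑ k ∈ Finset.range p, u ^ k) * (u - 1) = u ^ p - 1 := geom_sum_mul u p
    have hsum : (∑ k ∈ Finset.range p, u ^ k) ≤ (p:ℝ) * u ^ (p-1) := by
      have := Finset.sum_le_card_nsmul (Finset.range p) (fun k => u ^ k) (u ^ (p-1))
        (fun k hk => pow_le_pow_right₀ hu1 (by
          simp only [Finset.mem_range] at hk; omega))
      simpa [Finset.card_range, nsmul_eq_mul] using this
    have hkey : t - 1 ≤ 2 * (p:ℝ) * (u - 1) := by
      have h5 : t - 1 = (∑ k ∈ Finset.range p, u ^ k) * (u - 1) := by rw [hgeom, hup]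
      have hsum2 : (∑ k ∈ Finset.range p, u ^ k) ≤ 2 * (p:ℝ) := by
        calc (∑ k ∈ Finset.range p, u ^ k) ≤ (p:ℝ) * u ^ (p-1) := hsum
          _ ≤ (p:ℝ) * 2 := by nlinarith
          _ = 2 * (p:ℝ) := by ring
      rw [h5]
      nlinarith
    apply step
    have h6 : m * (t - 1) ≤ m * (2 * (p:ℝ) * (u - 1)) :=
      mul_le_mul_of_nonneg_left hkey hm0.le
    have h7 : 4 * (m * u) - 4 * m ≤ 4 * (∏ n, a n) ^ ((1:ℝ)/p) - 4 * m := by linarith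
    have h8 : M - m = m * (t - 1) := by rw [hMt]; ring
    have h9 : (p:ℝ)*(4*(m*u)-4*m) ≤ (p:ℝ)*(4*(∏ n, a n) ^ ((1:ℝ)/p) - 4*m) :=
      mul_le_mul_of_nonneg_left h7 hp0.le
    have h10 : 2*(M-m) ≤ (p:ℝ)*(4*(m*u)-4*m) := by rw [h8]; nlinarith [h6]
    linarith
  · -- 2M - 4m branch
    refine le_trans ?_ (le_max_right _ _)
    apply step
    -- show 2^(p/(p-1)) ≥ 2 + 1/(p-1)
    have hx0 : (0:ℝ) < (p:ℝ) - 1 := by linarith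
    set x : ℝ := 1/((p:ℝ)-1) with hxdef
    have hx1 : 0 < x := by positivity
    have hexp : (2:ℝ) ^ ((p:ℝ)/((p:ℝ)-1)) = 2 * Real.exp (x * Real.log 2) := by
      have : (p:ℝ)/((p:ℝ)-1) = 1 + x := by rw [hxdef]; field_simp; ring
      rw [this, Real.rpow_def_of_pos (by norm_num : (0:ℝ) < 2)]
      rw [mul_add, mul_one, Real.exp_add, Real.exp_log (by norm_num : (0:ℝ) < 2)]
      ring
    have hlog2 : (0.6931471803 : ℝ) < Real.log 2 := Real.log_two_gt_d9
    have hexp2 : 1 + x * Real.log 2 ≤ Real.exp (x * Real.log 2) := by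
      linarith [Real.add_one_le_exp (x * Real.log 2)]
    have h2x : 2 + x ≤ (2:ℝ) ^ ((p:ℝ)/((p:ℝ)-1)) := by
      rw [hexp]
      have hh := mul_le_mul_of_nonneg_left hlog2.le hx1.le
      linarith
    have htx : 2 + x ≤ t := le_trans h2x hB.le
    -- (p-1) M ≥ (2p-1) m
    have hMt2 : ((p:ℝ)-1) * M ≥ (2*(p:ℝ)-1) * m := by
      have : m * (2 + x) ≤ m * t := mul_le_mul_of_nonneg_left htx hm0.le
      rw [← hMt] at this
      have hx : ((p:ℝ)-1) * x = 1 := by rw [hxdef]; field_simp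
      have h9 : ((p:ℝ)-1) * (m*(2+x)) ≤ ((p:ℝ)-1) * M := mul_le_mul_of_nonneg_left this hx0.le
      have h11 : ((p:ℝ)-1)*(m*(2+x)) = (2*(p:ℝ)-2)*m + m*(((p:ℝ)-1)*x) := by ring
      rw [hx, mul_one] at h11
      linarith
    linarith
end
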